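/- Suppose G₁, G₂ ∈ ℝ^{k×k} are symmetric with G_i ≽ νI, and let α_i = argmin_α (1/2)αᵀG_iα − αᵀβ + λΩ(α) for a common β and convex Ω. Then ‖α₁ − α₂‖₂ ≤ (1/ν)‖G₁ − G₂‖_op ‖α₂‖₂. -/

import Mathlib

open scoped BigOperators
open Matrix

private lemma symm_dot {k : ℕ} {G : Matrix (Fin k) (Fin k) ℝ} (h : G.IsSymm)
    (x y : Fin k → ℝ) : x ⬝ᵥ G.mulVec y = y ⬝ᵥ G.mulVec x := by
  rw [Matrix.dotProduct_mulVec, dotProduct_comm, ← Matrix.mulVec_transpose, h]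

private lemma first_order {k : ℕ} {ν lam : ℝ} (hν : 0 < ν) (hlam : 0 ≤ lam)
    {G : Matrix (Fin k) (Fin k) ℝ} (hsymm : G.IsSymm)
    (hpd : ∀ a : Fin k → ℝ, ν * (∑ i, (a i) ^ 2) ≤ a ⬝ᵥ G.mulVec a)
    {Om : (Fin k → ℝ) → ℝ} (hOm : ConvexOn ℝ Set.univ Om)
    {β a b : Fin k → ℝ}
    (h : ∀ c : Fin k → ℝ,
      (1 / 2) * (a ⬝ᵥ G.mulVec a) - a ⬝ᵥ β + lam * Om a
        ≤ (1 / 2) * (c ⬝ᵥ G.mulVec c) - c ⬝ᵥ β + lam * Om c) :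
    0 ≤ (b - a) ⬝ᵥ G.mulVec a - (b - a) ⬝ᵥ β + lam * (Om b - Om a) := by
  set u : Fin k → ℝ := b - a with hu
  set A : ℝ := u ⬝ᵥ G.mulVec a - u ⬝ᵥ β + lam * (Om b - Om a) with hA
  set B : ℝ := u ⬝ᵥ G.mulVec u with hB
  have hB0 : 0 ≤ B := le_trans (by positivity) (hpd u)
  have key : ∀ t : ℝ, 0 < t → t ≤ 1 → 0 ≤ t * A + t ^ 2 / 2 * B := by
    intro t ht0 ht1
    have hc := h (a + t • u)
    have hOmc : Om (a + t • u) ≤ (1 - t) * Om a + t * Om b := by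
      have := hOm.2 (Set.mem_univ a) (Set.mem_univ b) (by linarith : (0:ℝ) ≤ 1 - t)
        (le_of_lt ht0) (by ring)
      simpa [hu, smul_sub, smul_smul] using le_trans (le_of_eq (by
        congr 1
        funext i
        simp [hu]
        ring)) this
    have hquad : (a + t • u) ⬝ᵥ G.mulVec (a + t • u)
        = a ⬝ᵥ G.mulVec a + 2 * t * (u ⬝ᵥ G.mulVec a) + t ^ 2 * B := by
      have hsw : a ⬝ᵥ G.mulVec u = u ⬝ᵥ G.mulVec a := symm_dot hsymm a u
      simp only [Matrix.mulVec_add, Matrix.mulVec_smul, dotProduct_add,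
        add_dotProduct, dotProduct_smul, smul_dotProduct,
        smul_eq_mul, hB]
      rw [hsw]; ring
    have hdot : (a + t • u) ⬝ᵥ β = a ⬝ᵥ β + t * (u ⬝ᵥ β) := by
      simp [add_dotProduct, smul_dotProduct]
    rw [hquad, hdot] at hc
    have : lam * Om (a + t • u) ≤ lam * ((1 - t) * Om a + t * Om b) :=
      mul_le_mul_of_nonneg_left hOmc hlam
    nlinarith [hc, this]
  by_contra hAneg
  push_neg at hAneg
  rcases eq_or_lt_of_le hB0 with hB0' | hBpos
  · have := key 1 one_pos le_rfl
    nlinarith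
  · set t : ℝ := min 1 (-A / B) with ht
    have ht0 : 0 < t := lt_min one_pos (div_pos (by linarith) hBpos)
    have ht1 : t ≤ 1 := min_le_left _ _
    have htB : t * B ≤ -A := by
      have : t ≤ -A / B := min_le_right _ _
      calc t * B ≤ (-A / B) * B := by nlinarith
        _ = -A := by field_simp
    have := key t ht0 ht1
    nlinarith

/-- For symmetric `G₁, G₂ ≽ νI` and common `β`, the penalized codes
`α_i = argmin_α (1/2)αᵀG_iα − αᵀβ + λΩ(α)` satisfy
`‖α₁ − α₂‖₂ ≤ (1/ν)‖G₁ − G₂‖_op ‖α₂‖₂`, with `‖·‖_op` the (Euclidean) operator norm. -/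
theorem code_stability_in_gram
    (k : ℕ) (ν lam : ℝ) (hν : 0 < ν) (hlam : 0 ≤ lam)
    (G₁ G₂ : Matrix (Fin k) (Fin k) ℝ) (hsymm₁ : G₁.IsSymm) (hsymm₂ : G₂.IsSymm)
    (hpd₁ : ∀ a : Fin k → ℝ, ν * (∑ i, (a i) ^ 2) ≤ a ⬝ᵥ G₁.mulVec a)
    (hpd₂ : ∀ a : Fin k → ℝ, ν * (∑ i, (a i) ^ 2) ≤ a ⬝ᵥ G₂.mulVec a)
    (Om : (Fin k → ℝ) → ℝ) (hOm : ConvexOn ℝ Set.univ Om)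
    (β a₁ a₂ : Fin k → ℝ)
    (h₁ : ∀ b : Fin k → ℝ,
      (1 / 2) * (a₁ ⬝ᵥ G₁.mulVec a₁) - a₁ ⬝ᵥ β + lam * Om a₁
        ≤ (1 / 2) * (b ⬝ᵥ G₁.mulVec b) - b ⬝ᵥ β + lam * Om b)
    (h₂ : ∀ b : Fin k → ℝ,
      (1 / 2) * (a₂ ⬝ᵥ G₂.mulVec a₂) - a₂ ⬝ᵥ β + lam * Om a₂
        ≤ (1 / 2) * (b ⬝ᵥ G₂.mulVec b) - b ⬝ᵥ β + lam * Om b) :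
    Real.sqrt (∑ i, (a₁ i - a₂ i) ^ 2)
      ≤ (1 / ν) * ‖Matrix.toEuclideanCLM (𝕜 := ℝ) (G₁ - G₂)‖
          * Real.sqrt (∑ i, (a₂ i) ^ 2) := by
  set d : Fin k → ℝ := a₁ - a₂ with hd
  have hK1 := first_order (b := a₂) hν hlam hsymm₁ hpd₁ hOm h₁
  have hK2 := first_order (b := a₁) hν hlam hsymm₂ hpd₂ hOm h₂
  -- sum: d ⬝ᵥ G₁ a₁ ≤ d ⬝ᵥ G₂ a₂
  have hsum : d ⬝ᵥ G₁.mulVec a₁ ≤ d ⬝ᵥ G₂.mulVec a₂ := by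
    have e1 : (a₂ - a₁) = -d := by rw [hd]; abel
    rw [e1, neg_dotProduct, neg_dotProduct] at hK1
    rw [hd.symm] at hK2
    linarith [hK1, hK2]
  have hmain : ν * (∑ i, (d i) ^ 2) ≤ -(d ⬝ᵥ (G₁ - G₂).mulVec a₂) := by
    have h1 : d ⬝ᵥ G₁.mulVec d ≤ -(d ⬝ᵥ (G₁ - G₂).mulVec a₂) := by
      have e : G₁.mulVec d = G₁.mulVec a₁ - G₁.mulVec a₂ := by
        rw [hd, Matrix.mulVec_sub]
      rw [e, Matrix.sub_mulVec, dotProduct_sub, dotProduct_sub]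
      linarith [hsum]
    exact le_trans (hpd₁ d) h1
  -- Cauchy-Schwarz via EuclideanSpace
  set D : EuclideanSpace ℝ (Fin k) := (WithLp.equiv 2 (Fin k → ℝ)).symm d with hD
  set A₂ : EuclideanSpace ℝ (Fin k) := (WithLp.equiv 2 (Fin k → ℝ)).symm a₂ with hA₂
  set Y : EuclideanSpace ℝ (Fin k) := Matrix.toEuclideanCLM (𝕜 := ℝ) (G₁ - G₂) A₂ with hY
  have hYeq : Y = (WithLp.equiv 2 (Fin k → ℝ)).symm ((G₁ - G₂).mulVec a₂) := by
    rw [hY, hA₂]; rfl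
  have hinner : (inner ℝ D Y : ℝ) = d ⬝ᵥ (G₁ - G₂).mulVec a₂ := by
    rw [hYeq]
    simp [PiLp.inner_apply, hD, dotProduct, WithLp.equiv_symm_apply, mul_comm]
  have hDnorm : ‖D‖ = Real.sqrt (∑ i, (d i) ^ 2) := by
    rw [EuclideanSpace.norm_eq]
    congr 1
    refine Finset.sum_congr rfl fun i _ => ?_
    rw [Real.norm_eq_abs, sq_abs]
    rfl
  have hA₂norm : ‖A₂‖ = Real.sqrt (∑ i, (a₂ i) ^ 2) := by
    rw [EuclideanSpace.norm_eq]
    congr 1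
    refine Finset.sum_congr rfl fun i _ => ?_
    rw [Real.norm_eq_abs, sq_abs]
    rfl
  have hcs : -(d ⬝ᵥ (G₁ - G₂).mulVec a₂) ≤ ‖D‖ * ‖Y‖ := by
    have := real_inner_le_norm D (-Y)
    rw [inner_neg_right, hinner, norm_neg] at this
    exact this
  have hYbound : ‖Y‖ ≤ ‖Matrix.toEuclideanCLM (𝕜 := ℝ) (G₁ - G₂)‖ * ‖A₂‖ :=
    (Matrix.toEuclideanCLM (𝕜 := ℝ) (G₁ - G₂)).le_opNorm A₂
  set s : ℝ := Real.sqrt (∑ i, (d i) ^ 2) with hs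
  set r : ℝ := Real.sqrt (∑ i, (a₂ i) ^ 2) with hr
  set C : ℝ := ‖Matrix.toEuclideanCLM (𝕜 := ℝ) (G₁ - G₂)‖ with hC
  have hgoal : ν * s ^ 2 ≤ s * (C * r) := by
    have hsq : s ^ 2 = ∑ i, (d i) ^ 2 := Real.sq_sqrt (by positivity)
    have hDn : ‖D‖ = s := hDnorm
    have hYn : ‖Y‖ ≤ C * r := by rw [← hA₂norm]; exact hYbound
    have hDpos : 0 ≤ ‖D‖ := norm_nonneg _
    calc ν * s ^ 2 = ν * (∑ i, (d i) ^ 2) := by rw [hsq]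
      _ ≤ -(d ⬝ᵥ (G₁ - G₂).mulVec a₂) := hmain
      _ ≤ ‖D‖ * ‖Y‖ := hcs
      _ ≤ s * (C * r) := by rw [hDn]; exact mul_le_mul_of_nonneg_left hYn (hDn ▸ hDpos)
  have hs0 : 0 ≤ s := Real.sqrt_nonneg _
  have hr0 : 0 ≤ r := Real.sqrt_nonneg _
  have hC0 : 0 ≤ C := norm_nonneg _
  have hgoal2 : s ≤ (1 / ν) * C * r := by
    rcases eq_or_lt_of_le hs0 with h0 | hpos
    · rw [← h0]; positivity
    · rw [div_mul_eq_mul_div, div_mul_eq_mul_div, one_mul, le_div_iff₀ hν]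
      nlinarith
  have : ∀ i, (a₁ i - a₂ i) ^ 2 = (d i) ^ 2 := fun i => by rw [hd]; rfl
  simpa [this] using hgoal2
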